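/- Let R be a standard graded ring of dimension d ≥ 2 over a field of characteristic p > 0, I a homogeneous ideal of finite colength, and M a finitely generated non-negatively graded R-module. For each n, define g_n: ℝ → ℝ as the piecewise linear interpolation of the values g_n(m/q) = (1/q^{d-1})·ℓ(M/I^{[q]}M)_m for integers m (q = p^n), and g_n(x) = 0 for x < 0. Then each g_n is a continuous function with compact support, and there is a single compact interval [0, C] containing the supports of all g_n. -/

import Mathlib

open Filter Topology

/-- The `q`-th Frobenius power `I^{[q]}` of an ideal. -/
def frobeniusPower {R : Type*} [CommRing R] (I : Ideal R) (q : ℕ) : Ideal R :=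
  Ideal.span ((fun x => x ^ q) '' (I : Set R))

/-- `ℓ(M/I^{[q]}M)_m`: the `k`-dimension of the image of the degree-`m` piece `ℳ m`
in `M/I^{[q]}M`. -/
noncomputable def gradedPieceLength {k R M : Type*} [Field k] [CommRing R] [Algebra k R]
    [AddCommGroup M] [Module R M] [Module k M] [IsScalarTower k R M]
    (ℳ : ℕ → Submodule k M) (I : Ideal R) (q m : ℕ) : ℕ :=
  Module.finrank k
    ((ℳ m).map ((frobeniusPower I q • (⊤ : Submodule R M)).mkQ.restrictScalars k))

/-- The piecewise linear interpolation through the points `(m/q, v m)`, `m ∈ ℤ`. -/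
noncomputable def interpolate (v : ℤ → ℝ) (q : ℕ) (x : ℝ) : ℝ :=
  (1 - (x * q - ⌊x * q⌋)) * v ⌊x * q⌋ + (x * q - ⌊x * q⌋) * v (⌊x * q⌋ + 1)

/-- affine piece -/
noncomputable def interpAffine (v : ℤ → ℝ) (c : ℤ) : ℝ → ℝ :=
  fun t => (1 - (t - c)) * v c + (t - c) * v (c + 1)

lemma interpAffine_continuous (v : ℤ → ℝ) (c : ℤ) : Continuous (interpAffine v c) := by
  unfold interpAffine; fun_prop

noncomputable def interpF (v : ℤ → ℝ) : ℝ → ℝ :=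
  fun t => (1 - (t - ⌊t⌋)) * v ⌊t⌋ + (t - ⌊t⌋) * v (⌊t⌋ + 1)

lemma interpF_eq (v : ℤ → ℝ) {t : ℝ} {c : ℤ} (h : ⌊t⌋ = c) :
    interpF v t = interpAffine v c t := by
  simp [interpF, interpAffine, h]

lemma interpF_continuous (v : ℤ → ℝ) : Continuous (interpF v) := by
  rw [continuous_iff_continuousAt]
  intro t0
  rw [← continuousWithinAt_univ, ← Set.Iic_union_Ici (a := t0)]
  apply ContinuousWithinAt.union
  · -- left continuity
    rcases eq_or_lt_of_le (Int.floor_le t0) with h | h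
    · -- t0 is an integer
      set m := ⌊t0⌋ with hm
      have h1 : interpF v ((m : ℝ)) = v m := by simp [interpF]
      have h2 : interpAffine v (m - 1) ((m : ℝ)) = v m := by
        simp only [interpAffine]
        rw [show m - 1 + 1 = m from by ring]
        push_cast
        ring
      have heq : interpF v t0 = interpAffine v (m - 1) t0 := by
        rw [← h, h1, h2]
      have key : ContinuousWithinAt (interpF v) (Set.Ioc ((m : ℝ) - 1) t0) t0 := by
        refine ((interpAffine_continuous v (m - 1)).continuousAt.continuousWithinAt).congr
          (fun t ht => ?_) heq
        rcases eq_or_lt_of_le ht.2 with rfl | hlt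
        · exact heq
        · have hft : ⌊t⌋ = m - 1 := by
            rw [Int.floor_eq_iff]
            constructor
            · push_cast; linarith [ht.1]
            · push_cast; linarith [hlt, h.ge]
          rw [interpF_eq v hft]
      exact key.mono_of_mem_nhdsWithin (Ioc_mem_nhdsLE (by linarith [h.le]))
    · -- t0 not an integer
      have key : ContinuousWithinAt (interpF v) (Set.Ioc ((⌊t0⌋ : ℝ)) t0) t0 := by
        refine ((interpAffine_continuous v ⌊t0⌋).continuousAt.continuousWithinAt).congr
          (fun t ht => ?_) (interpF_eq v rfl)
        have hft : ⌊t⌋ = ⌊t0⌋ := by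
          rw [Int.floor_eq_iff]
          exact ⟨le_of_lt ht.1, lt_of_le_of_lt ht.2 (by push_cast; linarith [Int.lt_floor_add_one t0])⟩
        rw [interpF_eq v hft]
      exact key.mono_of_mem_nhdsWithin (Ioc_mem_nhdsLE h)
  · -- right continuity
    have key : ContinuousWithinAt (interpF v) (Set.Ico t0 ((⌊t0⌋ : ℝ) + 1)) t0 := by
      refine ((interpAffine_continuous v ⌊t0⌋).continuousAt.continuousWithinAt).congr
        (fun t ht => ?_) (interpF_eq v rfl)
      have hft : ⌊t⌋ = ⌊t0⌋ := by
        rw [Int.floor_eq_iff]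
        exact ⟨le_trans (Int.floor_le t0) ht.1, by push_cast at ht ⊢; linarith [ht.2]⟩
      rw [interpF_eq v hft]
    exact key.mono_of_mem_nhdsWithin (Ico_mem_nhdsGE (Int.lt_floor_add_one t0))

lemma interpolate_continuous (v : ℤ → ℝ) (q : ℕ) : Continuous (interpolate v q) := by
  have : interpolate v q = fun x => interpF v (x * q) := rfl
  rw [this]
  exact (interpF_continuous v).comp (continuous_id.mul continuous_const)

lemma frob_pow_le {R : Type*} [CommRing R] {μ q : ℕ} (hq : 1 ≤ q) (gens : Fin μ → R) :
    Ideal.span (Set.range gens) ^ (μ * (q - 1) + 1) ≤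
      frobeniusPower (Ideal.span (Set.range gens)) q := by
  set N := μ * (q - 1) + 1 with hN
  rw [Ideal.span, Submodule.span_pow, Submodule.span_le]
  intro x hx
  rw [Set.mem_pow] at hx
  obtain ⟨f, hf⟩ := hx
  rw [List.prod_ofFn] at hf
  choose gidx hgidx using fun j => (f j).2
  have hx' : (∏ j : Fin N, gens (gidx j)) = x := by
    rw [← hf]
    exact Finset.prod_congr rfl fun j _ => hgidx j
  have hcard : Fintype.card (Fin μ) * (q - 1) < Fintype.card (Fin N) := by
    simp [hN]
  obtain ⟨i, hi⟩ := Fintype.exists_lt_card_fiber_of_mul_lt_card (f := gidx) hcard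
  classical
  set s := Finset.univ.filter (fun j => gidx j = i) with hs
  have hsplit : (∏ j ∈ s, gens (gidx j)) * (∏ j ∈ sᶜ, gens (gidx j)) = x := by
    rw [← hx']
    exact Finset.prod_mul_prod_compl s _
  have hconst : (∏ j ∈ s, gens (gidx j)) = gens i ^ s.card := by
    rw [Finset.prod_congr rfl (fun j hj => by rw [(Finset.mem_filter.mp hj).2]),
      Finset.prod_const]
  have hcq : q ≤ s.card := by
    have : q - 1 < s.card := hi
    omega
  have hxe : x = gens i ^ q * (gens i ^ (s.card - q) * ∏ j ∈ sᶜ, gens (gidx j)) := by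
    rw [← hsplit, hconst, ← mul_assoc, ← pow_add]
    congr 2
    omega
  rw [hxe]
  refine Ideal.mul_mem_right _ _ (Ideal.subset_span ?_)
  exact ⟨gens i, Ideal.subset_span ⟨i, rfl⟩, rfl⟩

/-- Each interpolated function `g_n` (through the values
`(1/q^{d-1})·ℓ(M/I^{[q]}M)_m` at the points `m/q`, `q = p^n`, vanishing in negative
degrees) is continuous with compact support, and a single compact interval contains the
supports of all the `g_n`. -/
theorem stmt4
    (k : Type*) [Field k] (p : ℕ) (hp : p.Prime) [CharP k p]
    (R : Type*) [CommRing R] [IsNoetherianRing R] [Algebra k R]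
    (𝒜 : ℕ → Submodule k R) [GradedAlgebra 𝒜]
    [∀ m, FiniteDimensional k (𝒜 m)]
    (hstd : ∀ m : ℕ, (𝒜 (m + 1) : Set R) ⊆
      Submodule.span k (Set.image2 (· * ·) (𝒜 1 : Set R) (𝒜 m : Set R)))
    (d : ℕ) (hd : 2 ≤ d) (hdim : ringKrullDim R = d)
    (I : Ideal R) [Module.Finite k (R ⧸ I)]
    (M : Type*) [AddCommGroup M] [Module R M] [Module k M] [IsScalarTower k R M]
    [Module.Finite R M]
    (ℳ : ℕ → Submodule k M) [SetLike.GradedSMul 𝒜 ℳ] [DirectSum.Decomposition ℳ]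
    [∀ m, FiniteDimensional k (ℳ m)]
    (n0 μ l : ℕ) (hn0 : 0 < n0)
    (hirr : (Ideal.span {x : R | ∃ i > 0, x ∈ 𝒜 i}) ^ n0 ≤ I)
    (gens : Fin μ → R) (hhom : ∀ i, SetLike.IsHomogeneousElem 𝒜 (gens i))
    (hgen : I = Ideal.span (Set.range gens))
    (hmul : ∀ m : ℕ, (ℳ (m + l) : Set M) ⊆
      Submodule.span k (Set.image2 (· • ·) (𝒜 m : Set R) (ℳ l : Set M)))
    -- the function `g_n`
    (g : ℕ → ℝ → ℝ)
    (hg : ∀ n : ℕ, g n = interpolate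
      (fun m : ℤ => if 0 ≤ m then
          (gradedPieceLength ℳ I (p ^ n) m.toNat : ℝ) / (p : ℝ) ^ (n * (d - 1))
        else 0)
      (p ^ n)) :
    (∀ n, Continuous (g n) ∧ HasCompactSupport (g n)) ∧
      ∃ C : ℝ, ∀ n, Function.support (g n) ⊆ Set.Icc (-1 : ℝ) C := by

  classical
  set 𝔪 : Ideal R := Ideal.span {x : R | ∃ i > 0, x ∈ 𝒜 i} with h𝔪
  -- the degree-m piece lies in 𝔪^m
  have hA : ∀ m : ℕ, 1 ≤ m → (𝒜 m : Set R) ⊆ (𝔪 ^ m : Ideal R) := by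
    intro m
    induction m with
    | zero => exact fun h => absurd h (by omega)
    | succ m ih =>
      intro _
      rcases Nat.eq_zero_or_pos m with rfl | hm
      · intro x hx
        rw [pow_one]
        exact Ideal.subset_span ⟨1, Nat.one_pos, hx⟩
      · intro x hx
        have hsub : Submodule.span k (Set.image2 (· * ·) (𝒜 1 : Set R) (𝒜 m : Set R)) ≤
            (𝔪 ^ (m + 1)).restrictScalars k := by
          rw [Submodule.span_le]
          rintro _ ⟨a, ha, b, hb, rfl⟩
          show a * b ∈ 𝔪 ^ (m + 1)
          rw [pow_succ']
          exact Ideal.mul_mem_mul (Ideal.subset_span ⟨1, Nat.one_pos, ha⟩) (ih hm hb)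
        exact hsub (hstd m hx)
  -- vanishing of graded pieces of M/I^[q]M in large degrees
  have hvan : ∀ n m : ℕ, l + n0 * (μ * (p ^ n - 1) + 1) ≤ m →
      gradedPieceLength ℳ I (p ^ n) m = 0 := by
    intro n m hm
    have hq1 : 1 ≤ p ^ n := Nat.one_le_pow _ _ hp.pos
    obtain ⟨m', rfl⟩ : ∃ m', m = m' + l := ⟨m - l, by omega⟩
    have hm' : n0 * (μ * (p ^ n - 1) + 1) ≤ m' := by omega
    have hNpos : 0 < μ * (p ^ n - 1) + 1 := Nat.succ_pos _
    have hone : 1 ≤ m' := le_trans (Nat.mul_pos hn0 hNpos) hm'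
    have hspan : Submodule.span k (Set.image2 (· • ·) (𝒜 m' : Set R) (ℳ l : Set M)) ≤
        (frobeniusPower I (p ^ n) • (⊤ : Submodule R M)).restrictScalars k := by
      rw [Submodule.span_le]
      rintro _ ⟨a, ha, x, hx, rfl⟩
      show a • x ∈ frobeniusPower I (p ^ n) • (⊤ : Submodule R M)
      have ha1 : a ∈ 𝔪 ^ m' := hA m' hone ha
      have ha2 : a ∈ I ^ (μ * (p ^ n - 1) + 1) := by
        have l1 : 𝔪 ^ m' ≤ 𝔪 ^ (n0 * (μ * (p ^ n - 1) + 1)) := Ideal.pow_le_pow_right hm'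
        have l2 : 𝔪 ^ (n0 * (μ * (p ^ n - 1) + 1)) = (𝔪 ^ n0) ^ (μ * (p ^ n - 1) + 1) := by
          rw [← pow_mul]
        have l3 : (𝔪 ^ n0) ^ (μ * (p ^ n - 1) + 1) ≤ I ^ (μ * (p ^ n - 1) + 1) :=
          Ideal.pow_right_mono hirr _
        exact l3 (l2 ▸ l1 ha1)
      have ha3 : a ∈ frobeniusPower I (p ^ n) := by
        rw [hgen] at ha2 ⊢
        exact frob_pow_le hq1 gens ha2
      exact Submodule.smul_mem_smul ha3 Submodule.mem_top
    have hmap : (ℳ (m' + l)).map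
        ((frobeniusPower I (p ^ n) • (⊤ : Submodule R M)).mkQ.restrictScalars k) = ⊥ := by
      rw [Submodule.eq_bot_iff]
      rintro _ ⟨x, hx, rfl⟩
      simp only [LinearMap.restrictScalars_apply, Submodule.mkQ_apply]
      rw [Submodule.Quotient.mk_eq_zero]
      exact hspan (hmul m' hx)
    unfold gradedPieceLength
    rw [hmap]
    exact finrank_bot k _
  -- a single bound for the supports
  have hzero : ∀ n : ℕ, ∀ x : ℝ,
      x ∉ Set.Icc (-1 : ℝ) ((l + n0 * μ + n0 : ℕ) : ℝ) → g n x = 0 := by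
    intro n x hx
    rw [hg n]
    rw [Set.mem_Icc, not_and_or, not_le, not_le] at hx
    have hq1 : 1 ≤ p ^ n := Nat.one_le_pow _ _ hp.pos
    have hq : (1 : ℝ) ≤ ((p ^ n : ℕ) : ℝ) := by exact_mod_cast hq1
    simp only [interpolate]
    rcases hx with hx | hx
    · -- x < -1
      have h2 : x * ((p ^ n : ℕ) : ℝ) ≤ x * 1 := mul_le_mul_of_nonpos_left hq (by linarith)
      have h3 : ((⌊x * ((p ^ n : ℕ) : ℝ)⌋ : ℝ)) < -1 := by
        linarith [Int.floor_le (x * ((p ^ n : ℕ) : ℝ))]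
      have h4 : ⌊x * ((p ^ n : ℕ) : ℝ)⌋ < -1 := by exact_mod_cast h3
      rw [if_neg (by omega), if_neg (by omega)]
      ring
    · -- x above the bound
      have hCB : l + n0 * (μ * (p ^ n - 1) + 1) ≤ (l + n0 * μ + n0) * p ^ n := by
        obtain ⟨q', hq'⟩ : ∃ q', p ^ n = q' + 1 := ⟨p ^ n - 1, by omega⟩
        rw [hq']
        simp only [Nat.add_sub_cancel]
        nlinarith
      have hfl : ((l + n0 * (μ * (p ^ n - 1) + 1) : ℕ) : ℤ) ≤ ⌊x * ((p ^ n : ℕ) : ℝ)⌋ := by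
        apply Int.le_floor.mpr
        push_cast
        have step : ((l + n0 * (μ * (p ^ n - 1) + 1) : ℕ) : ℝ) ≤
            (((l + n0 * μ + n0) * p ^ n : ℕ) : ℝ) := by exact_mod_cast hCB
        push_cast at step hx hq
        nlinarith [mul_le_mul_of_nonneg_right hx.le (by linarith : (0:ℝ) ≤ (p:ℝ) ^ n)]
      rw [if_pos (by omega), if_pos (by omega)]
      rw [hvan n _ (by omega : l + n0 * (μ * (p ^ n - 1) + 1) ≤
            (⌊x * ((p ^ n : ℕ) : ℝ)⌋).toNat),
          hvan n _ (by omega : l + n0 * (μ * (p ^ n - 1) + 1) ≤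
            (⌊x * ((p ^ n : ℕ) : ℝ)⌋ + 1).toNat)]
      norm_num
  refine ⟨fun n => ⟨?_, ?_⟩, ⟨((l + n0 * μ + n0 : ℕ) : ℝ), fun n x hx => ?_⟩⟩
  · rw [hg n]
    exact interpolate_continuous _ _
  · exact HasCompactSupport.intro isCompact_Icc (hzero n)
  · by_contra hmem
    exact hx (hzero n x hmem)
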